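/- Let B be an n × n real matrix with nonnegative entries which is irreducible, meaning that for every pair of indices (i, j) there exists m ∈ ℕ with (B^m) i j > 0. Assume that 1 is an eigenvalue of B and that the spectral radius of B (viewed as a complex matrix via entrywise coercion) equals 1. Then the adjugate matrix of (1 − B) (where 1 denotes the identity matrix) has either all its entries strictly positive or all its entries strictly negative. -/

import Mathlib

open Matrix Filter Finset
open scoped ENNReal NNReal

attribute [local instance] Matrix.linftyOpNormedRing Matrix.linftyOpNormedAlgebra

namespace PFaux

variable {n : ℕ}

lemma entry_nonneg_mul {P Q : Matrix (Fin n) (Fin n) ℝ} (hP : ∀ i j, 0 ≤ P i j)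
    (hQ : ∀ i j, 0 ≤ Q i j) : ∀ i j, 0 ≤ (P * Q) i j := by
  intro i j
  rw [Matrix.mul_apply]
  exact Finset.sum_nonneg fun k _ => mul_nonneg (hP i k) (hQ k j)

lemma entry_nonneg_pow {P : Matrix (Fin n) (Fin n) ℝ} (hP : ∀ i j, 0 ≤ P i j) :
    ∀ m i j, 0 ≤ (P ^ m) i j := by
  intro m
  induction m with
  | zero => intro i j; rw [pow_zero, Matrix.one_apply]; split <;> norm_num
  | succ m ih =>
      rw [pow_succ]
      exact entry_nonneg_mul ih hP

lemma pow_le_onadd_pow {B : Matrix (Fin n) (Fin n) ℝ} (hB : ∀ i j, 0 ≤ B i j) :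
    ∀ m i j, (B ^ m) i j ≤ ((1 + B) ^ m) i j := by
  have h1B : ∀ i j, 0 ≤ (1 + B) i j := by
    intro i j
    have h1e : (0:ℝ) ≤ (1 : Matrix (Fin n) (Fin n) ℝ) i j := by
      rw [Matrix.one_apply]; split <;> norm_num
    rw [Matrix.add_apply]; linarith [hB i j]
  intro m
  induction m with
  | zero => intro i j; simp
  | succ m ih =>
      intro i j
      rw [pow_succ, pow_succ, Matrix.mul_apply, Matrix.mul_apply]
      have h1 : ∑ k, (B ^ m) i k * B k j ≤ ∑ k, ((1 + B) ^ m) i k * B k j :=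
        Finset.sum_le_sum fun k _ => mul_le_mul_of_nonneg_right (ih i k) (hB k j)
      have h2 : ∑ k, ((1 + B) ^ m) i k * B k j ≤ ∑ k, ((1 + B) ^ m) i k * (1 + B) k j := by
        refine Finset.sum_le_sum fun k _ => ?_
        refine mul_le_mul_of_nonneg_left ?_ (entry_nonneg_pow h1B m i k)
        have h1e : (0:ℝ) ≤ (1 : Matrix (Fin n) (Fin n) ℝ) k j := by
          rw [Matrix.one_apply]; split <;> norm_num
        rw [Matrix.add_apply]; linarith
      exact h1.trans h2

lemma onadd_pow_mono {B : Matrix (Fin n) (Fin n) ℝ} (hB : ∀ i j, 0 ≤ B i j)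
    {N M : ℕ} (h : N ≤ M) : ∀ i j, ((1 + B) ^ N) i j ≤ ((1 + B) ^ M) i j := by
  have h1B : ∀ i j, 0 ≤ (1 + B) i j := by
    intro i j
    have h1e : (0:ℝ) ≤ (1 : Matrix (Fin n) (Fin n) ℝ) i j := by
      rw [Matrix.one_apply]; split <;> norm_num
    rw [Matrix.add_apply]; linarith [hB i j]
  induction M, h using Nat.le_induction with
  | base => intro i j; exact le_rfl
  | succ M hNM ih =>
      intro i j
      refine (ih i j).trans ?_
      have : ((1 + B) ^ (M + 1)) i j = ((1 + B) ^ M) i j + ((1 + B) ^ M * B) i j := by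
        rw [pow_succ, mul_add, mul_one, Matrix.add_apply]
      rw [this]
      exact le_add_of_nonneg_right (entry_nonneg_mul (entry_nonneg_pow h1B M) hB i j)

lemma exists_allpos {B : Matrix (Fin n) (Fin n) ℝ} (hB : ∀ i j, 0 ≤ B i j)
    (hirr : ∀ i j, ∃ m : ℕ, 0 < (B ^ m) i j) :
    ∃ N : ℕ, ∀ i j, 0 < ((1 + B) ^ N) i j := by
  classical
  refine ⟨Finset.univ.sup (fun p : Fin n × Fin n => (hirr p.1 p.2).choose), fun i j => ?_⟩
  set N := Finset.univ.sup (fun p : Fin n × Fin n => (hirr p.1 p.2).choose) with hN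
  have hm : (hirr i j).choose ≤ N :=
    Finset.le_sup (f := fun p : Fin n × Fin n => (hirr p.1 p.2).choose)
      (Finset.mem_univ (i, j))
  calc (0:ℝ) < (B ^ (hirr i j).choose) i j := (hirr i j).choose_spec
    _ ≤ ((1 + B) ^ (hirr i j).choose) i j := pow_le_onadd_pow hB _ i j
    _ ≤ ((1 + B) ^ N) i j := onadd_pow_mono hB hm i j

lemma no_supergrowth (hn : 0 < n) (B : Matrix (Fin n) (Fin n) ℝ)
    (hρ : spectralRadius ℂ (B.map (fun x : ℝ => (x : ℂ))) = 1)
    (w : Fin n → ℝ) (hw : ∀ i, 0 < w i) (c : ℝ) (hc : 1 < c)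
    (h : ∀ i, c * w i ≤ (B *ᵥ w) i) (hB : ∀ i j, 0 ≤ B i j) : False := by
  classical
  haveI : NeZero n := ⟨hn.ne'⟩
  set i₀ : Fin n := ⟨0, hn⟩
  -- growth of powers
  have hpow : ∀ m i, c ^ m * w i ≤ ((B ^ m) *ᵥ w) i := by
    intro m
    induction m with
    | zero => intro i; simp
    | succ m ih =>
        intro i
        have : ((B ^ (m+1)) *ᵥ w) i = ∑ j, B i j * ((B ^ m) *ᵥ w) j := by
          rw [pow_succ']
          rw [← Matrix.mulVec_mulVec]
          simp [Matrix.mulVec, dotProduct]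
        rw [this]
        have h1 : ∑ j, B i j * (c ^ m * w j) ≤ ∑ j, B i j * ((B ^ m) *ᵥ w) j :=
          Finset.sum_le_sum fun j _ => mul_le_mul_of_nonneg_left (ih j) (hB i j)
        have h2 : ∑ j, B i j * (c ^ m * w j) = c ^ m * (B *ᵥ w) i := by
          simp only [Matrix.mulVec, dotProduct, Finset.mul_sum]
          exact Finset.sum_congr rfl fun j _ => by ring
        have h3 : c ^ (m+1) * w i ≤ c ^ m * (B *ᵥ w) i := by
          have := mul_le_mul_of_nonneg_left (h i) (pow_nonneg (by linarith : (0:ℝ) ≤ c) m)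
          calc c ^ (m+1) * w i = c ^ m * (c * w i) := by ring
            _ ≤ c ^ m * (B *ᵥ w) i := this
        exact h3.trans (h2 ▸ h1)
  set M := B.map (fun x : ℝ => (x : ℂ)) with hM
  set wc : Fin n → ℂ := fun i => (w i : ℂ) with hwc
  have hMp : ∀ m : ℕ, M ^ m = (B ^ m).map (fun x : ℝ => (x : ℂ)) := by
    intro m
    have : M = (algebraMap ℝ ℂ).mapMatrix B := by
      ext i j; simp [hM]
    rw [this, ← map_pow]
    ext i j; simp
  have hMv : ∀ m : ℕ, (M ^ m) *ᵥ wc = fun i => (((B ^ m) *ᵥ w) i : ℂ) := by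
    intro m
    ext i
    rw [hMp m]
    simp only [Matrix.mulVec, dotProduct, Matrix.map_apply, hwc]
    push_cast
    rfl
  have hwcnorm : 0 < ‖wc‖ := by
    have h1 : ‖wc i₀‖ ≤ ‖wc‖ := norm_le_pi_norm wc i₀
    have : 0 < ‖wc i₀‖ := by
      rw [hwc]
      simp only [Complex.norm_real, Real.norm_eq_abs]
      exact abs_pos.mpr (hw i₀).ne'
    linarith
  have hnorm : ∀ m : ℕ, c ^ m * w i₀ ≤ ‖M ^ m‖ * ‖wc‖ := by
    intro m
    have h1 : c ^ m * w i₀ ≤ ((B ^ m) *ᵥ w) i₀ := hpow m i₀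
    have h2 : ((B ^ m) *ᵥ w) i₀ ≤ ‖((M ^ m) *ᵥ wc) i₀‖ := by
      rw [hMv m]
      simp only [Complex.norm_real, Real.norm_eq_abs]
      exact le_abs_self _
    have h3 : ‖((M ^ m) *ᵥ wc) i₀‖ ≤ ‖(M ^ m) *ᵥ wc‖ := norm_le_pi_norm _ i₀
    have h4 : ‖(M ^ m) *ᵥ wc‖ ≤ ‖M ^ m‖ * ‖wc‖ := Matrix.linfty_opNorm_mulVec _ _
    linarith
  -- Gelfand
  haveI : CompleteSpace (Matrix (Fin n) (Fin n) ℂ) := FiniteDimensional.complete ℂ _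
  have hgel := spectrum.pow_nnnorm_pow_one_div_tendsto_nhds_spectralRadius M
  rw [hρ] at hgel
  obtain ⟨c', hc'1, hc'c⟩ : ∃ c' : ℝ, 1 < c' ∧ c' < c := ⟨(1 + c) / 2, by linarith, by linarith⟩
  have hc'0 : 0 < c' := by linarith
  have hev : ∀ᶠ (m : ℕ) in atTop, (‖M ^ m‖₊ : ℝ≥0∞) ^ (1 / (m:ℝ)) < ENNReal.ofReal c' := by
    refine hgel.eventually_lt_const ?_
    rw [show (1:ℝ≥0∞) = ENNReal.ofReal 1 by simp]
    exact (ENNReal.ofReal_lt_ofReal_iff hc'0).mpr hc'1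
  have hbound : ∀ᶠ (m : ℕ) in atTop, ‖M ^ m‖ < c' ^ m := by
    filter_upwards [hev, Filter.eventually_ge_atTop 1] with m h1 h2
    have hm0 : (m:ℝ) ≠ 0 := by positivity
    have h3 : ((‖M ^ m‖₊ : ℝ≥0∞) ^ (1 / (m:ℝ))) ^ (m:ℝ) < (ENNReal.ofReal c') ^ (m:ℝ) :=
      ENNReal.rpow_lt_rpow h1 (by positivity)
    rw [← ENNReal.rpow_mul, one_div, inv_mul_cancel₀ hm0, ENNReal.rpow_one] at h3
    rw [ENNReal.ofReal_rpow_of_pos hc'0, Real.rpow_natCast] at h3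
    rw [← ENNReal.ofReal_coe_nnreal, coe_nnnorm] at h3
    exact (ENNReal.ofReal_lt_ofReal_iff (by positivity)).mp h3
  have hrat : ∀ᶠ (m : ℕ) in atTop, ‖wc‖ / w i₀ < (c / c') ^ m := by
    have : Tendsto (fun m : ℕ => (c / c') ^ m) atTop atTop :=
      tendsto_pow_atTop_atTop_of_one_lt (by rw [lt_div_iff₀ hc'0]; linarith)
    exact this.eventually_gt_atTop _
  obtain ⟨m, h1, h2⟩ := (hbound.and hrat).exists
  have hb1 : c ^ m * w i₀ < c' ^ m * ‖wc‖ := by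
    calc c ^ m * w i₀ ≤ ‖M ^ m‖ * ‖wc‖ := hnorm m
      _ < c' ^ m * ‖wc‖ := by exact mul_lt_mul_of_pos_right h1 hwcnorm
  have hb2 : c' ^ m * ‖wc‖ < c ^ m * w i₀ := by
    have h3 : ‖wc‖ < (c / c') ^ m * w i₀ := by
      rw [div_lt_iff₀ (hw i₀)] at h2
      linarith [h2]
    have h4 : c' ^ m * ‖wc‖ < c' ^ m * ((c / c') ^ m * w i₀) :=
      mul_lt_mul_of_pos_left h3 (by positivity)
    have h5 : c' ^ m * ((c / c') ^ m * w i₀) = c ^ m * w i₀ := by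
      rw [div_pow]
      field_simp
    linarith
  linarith

lemma pow_mulVec_fix {B : Matrix (Fin n) (Fin n) ℝ} {x : Fin n → ℝ}
    (hx : B *ᵥ x = x) : ∀ m : ℕ, (B ^ m) *ᵥ x = x := by
  intro m
  induction m with
  | zero => simp [Matrix.one_mulVec]
  | succ m ih => rw [pow_succ', ← Matrix.mulVec_mulVec, ih, hx]

lemma uniq {B : Matrix (Fin n) (Fin n) ℝ} (hn : 0 < n) (hB : ∀ i j, 0 ≤ B i j)
    (hirr : ∀ i j, ∃ m : ℕ, 0 < (B ^ m) i j)
    {w : Fin n → ℝ} (hw : ∀ i, 0 < w i) (hBw : B *ᵥ w = w)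
    {x : Fin n → ℝ} (hx : B *ᵥ x = x) : ∃ t : ℝ, x = t • w := by
  classical
  haveI : NeZero n := ⟨hn.ne'⟩
  obtain ⟨i0, -, h0⟩ := Finset.exists_min_image Finset.univ (fun i => x i / w i)
    ⟨⟨0, hn⟩, Finset.mem_univ _⟩
  set t : ℝ := x i0 / w i0 with ht
  refine ⟨t, ?_⟩
  set y : Fin n → ℝ := x - t • w with hy
  have hy0 : ∀ i, 0 ≤ y i := by
    intro i
    have h1 : t ≤ x i / w i := h0 i (Finset.mem_univ i)
    have h2 : t * w i ≤ x i := (le_div_iff₀ (hw i)).mp h1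
    simp [hy]
    linarith
  have hyi0 : y i0 = 0 := by
    simp [hy, ht]
    rw [div_mul_cancel₀ _ (hw i0).ne']
    ring
  have hBy : B *ᵥ y = y := by
    rw [hy, Matrix.mulVec_sub, hx, Matrix.mulVec_smul, hBw]
  by_contra hne
  have hyne : y ≠ 0 := by
    intro h
    apply hne
    exact sub_eq_zero.mp (hy ▸ h)
  obtain ⟨j1, hj1⟩ : ∃ j1, y j1 ≠ 0 := Function.ne_iff.mp hyne
  have hj1pos : 0 < y j1 := lt_of_le_of_ne (hy0 j1) (Ne.symm hj1)
  obtain ⟨m, hm⟩ := hirr i0 j1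
  have hfix := pow_mulVec_fix hBy m
  have : 0 < ((B ^ m) *ᵥ y) i0 := by
    rw [show ((B ^ m) *ᵥ y) i0 = ∑ j, (B ^ m) i0 j * y j from rfl]
    refine Finset.sum_pos' (fun j _ => mul_nonneg (entry_nonneg_pow hB m i0 j) (hy0 j)) ?_
    exact ⟨j1, Finset.mem_univ _, mul_pos hm hj1pos⟩
  rw [hfix] at this
  rw [hyi0] at this
  exact lt_irrefl 0 this

lemma posEigen (hn : 0 < n) (B : Matrix (Fin n) (Fin n) ℝ)
    (hB : ∀ i j, 0 ≤ B i j)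
    (hirr : ∀ i j, ∃ m : ℕ, 0 < (B ^ m) i j)
    (heig : ∃ v : Fin n → ℝ, v ≠ 0 ∧ B.mulVec v = v)
    (hρ : spectralRadius ℂ (B.map (fun x : ℝ => (x : ℂ))) = 1) :
    ∃ w : Fin n → ℝ, (∀ i, 0 < w i) ∧ B *ᵥ w = w := by
  classical
  obtain ⟨v, hv0, hBv⟩ := heig
  set u : Fin n → ℝ := fun i => |v i| with hu
  have hu0 : ∀ i, 0 ≤ u i := fun i => abs_nonneg _
  obtain ⟨j0, hj0⟩ : ∃ j0, v j0 ≠ 0 := Function.ne_iff.mp hv0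
  have huj0 : 0 < u j0 := abs_pos.mpr hj0
  have hBu : ∀ i, u i ≤ (B *ᵥ u) i := by
    intro i
    have h1 : u i = |(B *ᵥ v) i| := by rw [hBv]
    have h2 : |(B *ᵥ v) i| ≤ ∑ j, |B i j * v j| := by
      rw [show (B *ᵥ v) i = ∑ j, B i j * v j from rfl]
      exact Finset.abs_sum_le_sum_abs _ _
    have h3 : ∑ j, |B i j * v j| = (B *ᵥ u) i := by
      refine Finset.sum_congr rfl fun j _ => ?_
      rw [abs_mul, abs_of_nonneg (hB i j)]
    rw [h1, ← h3]
    exact h2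
  obtain ⟨N, hN⟩ := exists_allpos hB hirr
  have hcomm : B * (1 + B) ^ N = (1 + B) ^ N * B :=
    (((Commute.one_right B).add_right (Commute.refl B)).pow_right N).eq
  have hposvec : ∀ z : Fin n → ℝ, (∀ i, 0 ≤ z i) → (∃ j, 0 < z j) →
      ∀ i, 0 < (((1 + B) ^ N) *ᵥ z) i := by
    intro z hz ⟨j1, hj1⟩ i
    rw [show (((1 + B) ^ N) *ᵥ z) i = ∑ j, ((1 + B) ^ N) i j * z j from rfl]
    refine Finset.sum_pos' (fun j _ => mul_nonneg (hN i j).le (hz j)) ?_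
    exact ⟨j1, Finset.mem_univ _, mul_pos (hN i j1) hj1⟩
  set w : Fin n → ℝ := ((1 + B) ^ N) *ᵥ u with hw
  have hwpos : ∀ i, 0 < w i := hposvec u hu0 ⟨j0, huj0⟩
  by_cases hBuu : B *ᵥ u = u
  · refine ⟨w, hwpos, ?_⟩
    rw [hw, Matrix.mulVec_mulVec, hcomm, ← Matrix.mulVec_mulVec, hBuu]
  · exfalso
    set z : Fin n → ℝ := B *ᵥ u - u with hz
    have hz0 : ∀ i, 0 ≤ z i := fun i => by simp [hz]; linarith [hBu i]
    have hzne : ∃ j, 0 < z j := by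
      by_contra hc
      push_neg at hc
      apply hBuu
      funext i
      have := le_antisymm (hc i) (hz0 i)
      have h5 : (B *ᵥ u) i - u i = 0 := by
        have h6 := this
        simp [hz] at h6
        linarith
      linarith
    set y : Fin n → ℝ := ((1 + B) ^ N) *ᵥ z with hy
    have hypos : ∀ i, 0 < y i := hposvec z hz0 hzne
    have hBww : B *ᵥ w = w + y := by
      rw [hw, Matrix.mulVec_mulVec, hcomm, ← Matrix.mulVec_mulVec, hy,
        ← Matrix.mulVec_add]
      rw [hz]
      funext i; simp
    obtain ⟨iδ, -, hiδ⟩ := Finset.exists_min_image Finset.univ y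
      ⟨⟨0, hn⟩, Finset.mem_univ _⟩
    obtain ⟨iW, -, hiW⟩ := Finset.exists_max_image Finset.univ w
      ⟨⟨0, hn⟩, Finset.mem_univ _⟩
    set c : ℝ := 1 + y iδ / w iW with hc
    have hc1 : 1 < c := by
      rw [hc]
      have : 0 < y iδ / w iW := div_pos (hypos iδ) (hwpos iW)
      linarith
    have hcw : ∀ i, c * w i ≤ (B *ᵥ w) i := by
      intro i
      rw [hBww]
      have h1 : (y iδ / w iW) * w i ≤ y iδ := by
        have h2 : (y iδ / w iW) * w i ≤ (y iδ / w iW) * w iW :=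
          mul_le_mul_of_nonneg_left (hiW i (Finset.mem_univ i))
            (div_pos (hypos iδ) (hwpos iW)).le
        rw [div_mul_cancel₀ _ (hwpos iW).ne'] at h2
        exact h2
      have h3 : y iδ ≤ y i := hiδ i (Finset.mem_univ i)
      have : c * w i = w i + (y iδ / w iW) * w i := by rw [hc]; ring
      rw [this]
      simp only [Pi.add_apply]
      linarith
    exact no_supergrowth hn B hρ w hwpos c hc1 hcw hB

lemma specRadius_transpose (M : Matrix (Fin n) (Fin n) ℂ) :
    spectralRadius ℂ Mᵀ = spectralRadius ℂ M := by
  classical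
  have hspec : spectrum ℂ Mᵀ = spectrum ℂ M := by
    ext z
    rw [spectrum.mem_iff, spectrum.mem_iff, not_iff_not]
    have h1 : algebraMap ℂ (Matrix (Fin n) (Fin n) ℂ) z - Mᵀ
        = (algebraMap ℂ (Matrix (Fin n) (Fin n) ℂ) z - M)ᵀ := by
      rw [Algebra.algebraMap_eq_smul_one, Matrix.transpose_sub, Matrix.transpose_smul,
        Matrix.transpose_one]
    rw [h1, Matrix.isUnit_iff_isUnit_det, Matrix.isUnit_iff_isUnit_det,
      Matrix.det_transpose]
  unfold spectralRadius
  rw [hspec]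

end PFaux

theorem stmt12 (n : ℕ) (hn : 0 < n) (B : Matrix (Fin n) (Fin n) ℝ)
    (hB : ∀ i j, 0 ≤ B i j)
    (hirr : ∀ i j, ∃ m : ℕ, 0 < (B ^ m) i j)
    (heig : ∃ v : Fin n → ℝ, v ≠ 0 ∧ B.mulVec v = v)
    (hρ : spectralRadius ℂ (B.map (fun x : ℝ => (x : ℂ))) = 1) :
    (∀ i j, 0 < (1 - B).adjugate i j) ∨ (∀ i j, (1 - B).adjugate i j < 0) := by
  classical
  haveI : NeZero n := ⟨hn.ne'⟩
  set A : Matrix (Fin n) (Fin n) ℝ := 1 - B with hA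
  -- determinant zero
  have hdet : A.det = 0 := by
    obtain ⟨v, hv0, hBv⟩ := heig
    refine Matrix.exists_mulVec_eq_zero_iff.mp ⟨v, hv0, ?_⟩
    rw [hA, Matrix.sub_mulVec, Matrix.one_mulVec, hBv, sub_self]
  -- transpose data
  have hBt : ∀ i j, 0 ≤ Bᵀ i j := fun i j => hB j i
  have hirrt : ∀ i j, ∃ m : ℕ, 0 < (Bᵀ ^ m) i j := by
    intro i j
    obtain ⟨m, hm⟩ := hirr j i
    exact ⟨m, by rw [← Matrix.transpose_pow]; exact hm⟩
  have hAt : (1 : Matrix (Fin n) (Fin n) ℝ) - Bᵀ = Aᵀ := by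
    rw [hA, Matrix.transpose_sub, Matrix.transpose_one]
  have heigt : ∃ v : Fin n → ℝ, v ≠ 0 ∧ Bᵀ.mulVec v = v := by
    have hdett : ((1 : Matrix (Fin n) (Fin n) ℝ) - Bᵀ).det = 0 := by
      rw [hAt, Matrix.det_transpose]; exact hdet
    obtain ⟨v, hv0, hv⟩ := Matrix.exists_mulVec_eq_zero_iff.mpr hdett
    refine ⟨v, hv0, ?_⟩
    rw [Matrix.sub_mulVec, Matrix.one_mulVec] at hv
    exact (sub_eq_zero.mp hv).symm
  have hρt : spectralRadius ℂ (Bᵀ.map (fun x : ℝ => (x : ℂ))) = 1 := by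
    rw [show Bᵀ.map (fun x : ℝ => (x : ℂ)) = (B.map (fun x : ℝ => (x : ℂ)))ᵀ from rfl]
    rw [PFaux.specRadius_transpose]
    exact hρ
  -- positive eigenvectors
  obtain ⟨w, hw, hBw⟩ := PFaux.posEigen hn B hB hirr heig hρ
  obtain ⟨w', hw', hBw'⟩ := PFaux.posEigen hn Bᵀ hBt hirrt heigt hρt
  have hAw : A *ᵥ w = 0 := by
    rw [hA, Matrix.sub_mulVec, Matrix.one_mulVec, hBw, sub_self]
  have hAtw' : Aᵀ *ᵥ w' = 0 := by
    rw [← hAt, Matrix.sub_mulVec, Matrix.one_mulVec, hBw', sub_self]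
  -- adjugate annihilation
  have hmulAdj : A * A.adjugate = 0 := by
    rw [Matrix.mul_adjugate, hdet, zero_smul]
  have hadjMul : A.adjugate * A = 0 := by
    rw [Matrix.adjugate_mul, hdet, zero_smul]
  -- columns proportional to w
  have hcol : ∀ j, ∃ t : ℝ, (fun i => A.adjugate i j) = t • w := by
    intro j
    refine PFaux.uniq hn hB hirr hw hBw ?_
    have h1 : A *ᵥ (fun i => A.adjugate i j) = 0 := by
      funext i
      have : (A *ᵥ (fun i => A.adjugate i j)) i = (A * A.adjugate) i j := by
        simp [Matrix.mulVec, dotProduct, Matrix.mul_apply]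
      rw [this, hmulAdj]
      rfl
    rw [hA, Matrix.sub_mulVec, Matrix.one_mulVec] at h1
    exact (sub_eq_zero.mp h1).symm
  -- rows proportional to w'
  have hrow : ∀ i, ∃ s : ℝ, (fun j => A.adjugate i j) = s • w' := by
    intro i
    refine PFaux.uniq hn hBt hirrt hw' hBw' ?_
    have h1 : Aᵀ *ᵥ (fun j => A.adjugate i j) = 0 := by
      funext j
      have : (Aᵀ *ᵥ (fun j => A.adjugate i j)) j = (A.adjugate * A) i j := by
        rw [Matrix.mul_apply]
        simp only [Matrix.mulVec, dotProduct, Matrix.transpose_apply]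
        exact Finset.sum_congr rfl fun k _ => mul_comm _ _
      rw [this, hadjMul]
      rfl
    rw [← hAt, Matrix.sub_mulVec, Matrix.one_mulVec] at h1
    exact (sub_eq_zero.mp h1).symm
  -- a nonzero entry
  set i₀ : Fin n := ⟨0, hn⟩
  have hne : A.adjugate i₀ i₀ ≠ 0 := by
    intro h0
    rw [Matrix.adjugate_apply] at h0
    obtain ⟨cv, hcv0, hcvM⟩ := Matrix.exists_vecMul_eq_zero_iff.mpr h0
    set Mu : Matrix (Fin n) (Fin n) ℝ := A.updateRow i₀ (Pi.single i₀ 1) with hMu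
    have hMuw : Mu *ᵥ w = Pi.single i₀ (w i₀) := by
      funext k
      by_cases hk : k = i₀
      · subst hk
        have h7 : (Mu *ᵥ w) i₀ = Pi.single i₀ (1:ℝ) ⬝ᵥ w := by
          simp [hMu, Matrix.mulVec, Matrix.updateRow_self]
        rw [h7, single_dotProduct, one_mul, Pi.single_eq_same]
      · have : (Mu *ᵥ w) k = (A *ᵥ w) k := by
          simp [hMu, Matrix.mulVec, Matrix.updateRow_ne hk]
        rw [this, hAw]
        simp [Pi.single_eq_of_ne hk]
    have hdp : cv i₀ * w i₀ = 0 := by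
      have h1 : cv ⬝ᵥ (Mu *ᵥ w) = (cv ᵥ* Mu) ⬝ᵥ w := Matrix.dotProduct_mulVec cv Mu w
      rw [hcvM, zero_dotProduct, hMuw, dotProduct_single] at h1
      -- h1 : cv i₀ * w i₀ = 0
      exact h1
    have hcvi0 : cv i₀ = 0 := by
      rcases mul_eq_zero.mp hdp with h | h
      · exact h
      · exact absurd h (hw i₀).ne'
    have hcvA : cv ᵥ* A = 0 := by
      funext j'
      have h1 : (cv ᵥ* Mu) j' = (cv ᵥ* A) j' := by
        simp only [Matrix.vecMul, dotProduct]
        refine Finset.sum_congr rfl fun k _ => ?_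
        by_cases hk : k = i₀
        · subst hk; rw [hcvi0]; ring
        · rw [hMu, Matrix.updateRow_ne hk]
      rw [← h1, hcvM]
    have hcvEig : Bᵀ *ᵥ cv = cv := by
      have h1 : Aᵀ *ᵥ cv = 0 := by rw [Matrix.mulVec_transpose, hcvA]
      rw [← hAt, Matrix.sub_mulVec, Matrix.one_mulVec] at h1
      exact (sub_eq_zero.mp h1).symm
    obtain ⟨t, htc⟩ := PFaux.uniq hn hBt hirrt hw' hBw' hcvEig
    have ht0 : t = 0 := by
      have h1 : cv i₀ = t * w' i₀ := by rw [htc]; rfl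
      rw [hcvi0] at h1
      rcases mul_eq_zero.mp h1.symm with h | h
      · exact h
      · exact absurd h (hw' i₀).ne'
    apply hcv0
    rw [htc, ht0, zero_smul]
  -- structure of adjugate
  obtain ⟨t0, ht0⟩ := hcol i₀
  have ht0w : A.adjugate i₀ i₀ = t0 * w i₀ := by
    have := congrFun ht0 i₀
    simpa using this
  have ht0ne : t0 ≠ 0 := by
    intro h
    apply hne
    rw [ht0w, h, zero_mul]
  have key : ∀ i j, ∃ s : ℝ, A.adjugate i j = s * w' j ∧ s * w' i₀ = t0 * w i := by
    intro i j
    obtain ⟨s, hs⟩ := hrow i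
    refine ⟨s, ?_, ?_⟩
    · have := congrFun hs j
      simpa using this
    · have h1 : A.adjugate i i₀ = s * w' i₀ := by
        have := congrFun hs i₀
        simpa using this
      have h2 : A.adjugate i i₀ = t0 * w i := by
        have := congrFun ht0 i
        simpa using this
      rw [← h1, h2]
  rcases lt_trichotomy t0 0 with hlt | heq | hgt
  · right
    intro i j
    obtain ⟨s, hs1, hs2⟩ := key i j
    have hs0 : s < 0 := by
      by_contra hsc
      push_neg at hsc
      have : 0 ≤ s * w' i₀ := mul_nonneg hsc (hw' i₀).le
      have : t0 * w i < 0 := mul_neg_of_neg_of_pos hlt (hw i)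
      linarith [hs2]
    rw [hs1]
    exact mul_neg_of_neg_of_pos hs0 (hw' j)
  · exact absurd heq ht0ne
  · left
    intro i j
    obtain ⟨s, hs1, hs2⟩ := key i j
    have hs0 : 0 < s := by
      by_contra hsc
      push_neg at hsc
      have : s * w' i₀ ≤ 0 := mul_nonpos_of_nonpos_of_nonneg hsc (hw' i₀).le
      have : 0 < t0 * w i := mul_pos hgt (hw i)
      linarith [hs2]
    rw [hs1]
    exact mul_pos hs0 (hw' j)
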